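/- Fix an integer d ≥ 2 and a unit vector ψ ∈ ℂ^d, and set Q := (|ψ⟩⟨ψ|)ᵀ = |ψ̄⟩⟨ψ̄|, where ψ̄ is the entrywise complex conjugate of ψ. Define the performance operator on ℂ^d_I ⊗ ℂ^d_O ⊗ ℂ^d_F by Ω := (1/d) · Q_O ⊗ Φ_{IF} + (1/(d²−1)) · (1_d − Q/d)_O ⊗ (1 − Φ)_{IF}, where subscripts indicate the tensor factors on which each operator acts (Q and 1_d − Q/d on the factor O; Φ and 1 − Φ on the factors I, F). Then the maximum of Tr(S Ω) over all single-call deterministic superchannels S equals (2d+1)/(d² + d), and it is attained. This quantity is the optimal average fidelity of a deterministic single-call protocol transforming an arbitrary unknown U ∈ SU(d) into the state Uᵀ|ψ⟩⟨ψ|U̅ on the known pure state ψ. -/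

import Mathlib

open Matrix Kronecker BigOperators ComplexOrder

noncomputable section

/-- Entrywise complex conjugate `U̅` of a matrix. -/
def mconj {d : ℕ} (U : Matrix (Fin d) (Fin d) ℂ) : Matrix (Fin d) (Fin d) ℂ :=
  U.map (starRingEnd ℂ)

/-- Rank-one outer product `|v⟩⟨v|`. -/
def outer {n : Type*} (v : n → ℂ) : Matrix n n ℂ :=
  Matrix.vecMulVec v (star v)

/-- Choi vector `|U⟩⟩ = Σ_i e_i ⊗ U e_i`. -/
def choiVec {d : ℕ} (U : Matrix (Fin d) (Fin d) ℂ) : Fin d × Fin d → ℂ :=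
  fun p => U p.2 p.1

/-- `|U⟩⟩⟨⟨U|`. -/
def choiProj {d : ℕ} (U : Matrix (Fin d) (Fin d) ℂ) :
    Matrix (Fin d × Fin d) (Fin d × Fin d) ℂ :=
  outer (choiVec U)

/-- Partial trace over the first tensor factor. -/
def ptrLeft {α β : Type*} [Fintype α] (S : Matrix (α × β) (α × β) ℂ) :
    Matrix β β ℂ :=
  fun b b' => ∑ a, S (a, b) (a, b')

/-- Partial trace over the second (last) tensor factor. -/
def ptrRight {α β : Type*} [Fintype β] (S : Matrix (α × β) (α × β) ℂ) :
    Matrix α α ℂ :=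
  fun a a' => ∑ b, S (a, b) (a', b)

/-- Action `S ⋆ U := Tr_{IO}[ S · (|U̅⟩⟩⟨⟨U̅|_{IO} ⊗ 1_F) ]` of a single-call
supermap `S` on `I ⊗ O ⊗ F` applied to the unitary channel given by `U`. -/
def act {d dF : ℕ}
    (S : Matrix ((Fin d × Fin d) × Fin dF) ((Fin d × Fin d) × Fin dF) ℂ)
    (U : Matrix (Fin d) (Fin d) ℂ) : Matrix (Fin dF) (Fin dF) ℂ :=
  ptrLeft (S * (choiProj (mconj U) ⊗ₖ (1 : Matrix (Fin dF) (Fin dF) ℂ)))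

/-- A single-call deterministic superchannel (channels-to-states):
`S ≥ 0` with `Tr_F(S) = σ ⊗ 1_d`, `σ ≥ 0`, `Tr σ = 1`. -/
def IsSuperchannel {d dF : ℕ}
    (S : Matrix ((Fin d × Fin d) × Fin dF) ((Fin d × Fin d) × Fin dF) ℂ) : Prop :=
  S.PosSemidef ∧
    ∃ σ : Matrix (Fin d) (Fin d) ℂ, σ.PosSemidef ∧ σ.trace = 1 ∧
      ptrRight S = σ ⊗ₖ (1 : Matrix (Fin d) (Fin d) ℂ)

/-- The maximally entangled unit vector `|φ⁺⟩ = (1/√d) Σ_i e_i ⊗ e_i`. -/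
def maxEntVec (d : ℕ) : Fin d × Fin d → ℂ :=
  fun p => if p.1 = p.2 then ((1 / Real.sqrt d : ℝ) : ℂ) else 0

/-- `Φ = |φ⁺⟩⟨φ⁺|`. -/
def Phi (d : ℕ) : Matrix (Fin d × Fin d) (Fin d × Fin d) ℂ := outer (maxEntVec d)

/-- The performance operator
`Ω = (1/d)·Q_O ⊗ Φ_{IF} + (1/(d²−1))·(1 − Q/d)_O ⊗ (1 − Φ)_{IF}` with
`Q = (|ψ⟩⟨ψ|)ᵀ`, written on the index order `(I × O) × F`. -/
def OmegaTrans {d : ℕ} (ψ : Fin d → ℂ) :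
    Matrix ((Fin d × Fin d) × Fin d) ((Fin d × Fin d) × Fin d) ℂ :=
  fun x y =>
    ((d : ℂ))⁻¹ * (outer ψ)ᵀ x.1.2 y.1.2 * Phi d (x.1.1, x.2) (y.1.1, y.2)
    + ((d : ℂ) ^ 2 - 1)⁻¹ *
        ((1 : Matrix (Fin d) (Fin d) ℂ) - ((d : ℂ))⁻¹ • (outer ψ)ᵀ) x.1.2 y.1.2 *
        ((1 : Matrix (Fin d × Fin d) (Fin d × Fin d) ℂ) - Phi d) (x.1.1, x.2) (y.1.1, y.2)

-- ===================== auxiliary lemmas =====================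

/-- Reindexing equivalence `((i,o),f) ↦ (o,(i,f))`. -/
def reix (d : ℕ) : ((Fin d × Fin d) × Fin d) ≃ (Fin d × (Fin d × Fin d)) where
  toFun j := (j.1.2, (j.1.1, j.2))
  invFun p := ((p.2.1, p.1), p.2.2)
  left_inv := fun _ => rfl
  right_inv := fun _ => rfl

/-- `A_O ⊗ B_{IF}` arranged on index order `(I × O) × F`. -/
def mixM {d : ℕ} (A : Matrix (Fin d) (Fin d) ℂ)
    (B : Matrix (Fin d × Fin d) (Fin d × Fin d) ℂ) :
    Matrix ((Fin d × Fin d) × Fin d) ((Fin d × Fin d) × Fin d) ℂ :=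
  fun x y => A x.1.2 y.1.2 * B (x.1.1, x.2) (y.1.1, y.2)

lemma mixM_conjTranspose {d : ℕ} (A : Matrix (Fin d) (Fin d) ℂ) (B) :
    (mixM A B)ᴴ = mixM Aᴴ Bᴴ := by
  ext x y
  simp [mixM, conjTranspose_apply, mul_comm]

lemma mixM_mul {d : ℕ} (A A' : Matrix (Fin d) (Fin d) ℂ) (B B') :
    mixM A B * mixM A' B' = mixM (A * A') (B * B') := by
  ext x y
  simp only [mixM, Matrix.mul_apply]
  rw [Finset.sum_mul_sum]
  rw [show (∑ i : Fin d, ∑ j : Fin d × Fin d,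
      A x.1.2 i * A' i y.1.2 * (B (x.1.1, x.2) j * B' j (y.1.1, y.2)))
      = ∑ q : Fin d × (Fin d × Fin d),
        A x.1.2 q.1 * A' q.1 y.1.2 * (B (x.1.1, x.2) q.2 * B' q.2 (y.1.1, y.2)) from by
    rw [Fintype.sum_prod_type]]
  exact Fintype.sum_equiv (reix d) _ _ (fun j => by simp [reix]; ring)

lemma mixM_trace {d : ℕ} (A : Matrix (Fin d) (Fin d) ℂ) (B) :
    (mixM A B).trace = A.trace * B.trace := by
  simp only [Matrix.trace, diag_apply, mixM]
  rw [Finset.sum_mul_sum]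
  rw [show (∑ i : Fin d, ∑ j : Fin d × Fin d, A i i * B j j)
      = ∑ q : Fin d × (Fin d × Fin d), A q.1 q.1 * B q.2 q.2 from by
    rw [Fintype.sum_prod_type]]
  exact Fintype.sum_equiv (reix d) _ _ (fun j => by simp [reix])

lemma mixM_posSemidef {d : ℕ} {A : Matrix (Fin d) (Fin d) ℂ} {B}
    (hA : A.PosSemidef) (hB : B.PosSemidef) : (mixM A B).PosSemidef := by
  obtain ⟨A', rfl⟩ : ∃ B, _ = Bᴴ * B := by
    open scoped MatrixOrder in
    simpa [star_eq_conjTranspose] using CStarAlgebra.nonneg_iff_eq_star_mul_self.mp hA.nonneg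
  obtain ⟨B', rfl⟩ : ∃ B, _ = Bᴴ * B := by
    open scoped MatrixOrder in
    simpa [star_eq_conjTranspose] using CStarAlgebra.nonneg_iff_eq_star_mul_self.mp hB.nonneg
  rw [← mixM_mul, ← mixM_conjTranspose]
  exact posSemidef_conjTranspose_mul_self _

lemma outer_mul_self {n : Type*} [Fintype n] (v : n → ℂ) :
    outer v * outer v = (star v ⬝ᵥ v) • outer v := by
  ext i j
  simp only [outer, Matrix.mul_apply, vecMulVec_apply, Matrix.smul_apply, dotProduct,
    Pi.star_apply, smul_eq_mul, Finset.sum_mul, Finset.mul_sum]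
  exact Finset.sum_congr rfl fun k _ => by ring

lemma outer_conjTranspose {n : Type*} (v : n → ℂ) : (outer v)ᴴ = outer v := by
  ext i j
  simp [outer, conjTranspose_apply, vecMulVec_apply, mul_comm]

lemma outer_posSemidef {n : Type*} [Fintype n] (v : n → ℂ) : (outer v).PosSemidef := by
  refine posSemidef_iff_dotProduct_mulVec.mpr ⟨outer_conjTranspose v, fun x => ?_⟩
  have : star x ⬝ᵥ (outer v *ᵥ x) = star (star v ⬝ᵥ x) * (star v ⬝ᵥ x) := by
    simp only [outer, dotProduct, mulVec, vecMulVec_apply, Pi.star_apply, dotProduct,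
      star_sum, star_mul', star_star, Finset.sum_mul, Finset.mul_sum]
    rw [Finset.sum_comm]
    exact Finset.sum_congr rfl fun k _ => Finset.sum_congr rfl fun l _ => by ring
  rw [this]
  exact star_mul_self_nonneg _

lemma outer_trace {n : Type*} [Fintype n] (v : n → ℂ) :
    (outer v).trace = star v ⬝ᵥ v := by
  simp [Matrix.trace, outer, vecMulVec_apply, dotProduct, mul_comm]

lemma posSemidef_trace_nonneg {n : Type*} [Fintype n] [DecidableEq n] {M : Matrix n n ℂ}
    (hM : M.PosSemidef) : 0 ≤ M.trace := by
  refine Finset.sum_nonneg fun i _ => ?_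
  have := hM.dotProduct_mulVec_nonneg (Pi.single i 1)
  simpa [mulVec_single, dotProduct, Pi.single_apply, apply_ite] using this

lemma posSemidef_trace_mul_nonneg {n : Type*} [Fintype n] [DecidableEq n]
    {M N : Matrix n n ℂ} (hM : M.PosSemidef) (hN : N.PosSemidef) :
    0 ≤ (M * N).trace := by
  obtain ⟨C, rfl⟩ : ∃ B, _ = Bᴴ * B := by
    open scoped MatrixOrder in
    simpa [star_eq_conjTranspose] using CStarAlgebra.nonneg_iff_eq_star_mul_self.mp hN.nonneg
  rw [← Matrix.mul_assoc, Matrix.trace_mul_cycle]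
  exact posSemidef_trace_nonneg (hM.mul_mul_conjTranspose_same C)

lemma smul_posSemidef {n : Type*} [Fintype n] {M : Matrix n n ℂ}
    (hM : M.PosSemidef) {r : ℝ} (hr : 0 ≤ r) : ((r : ℂ) • M).PosSemidef := by
  refine posSemidef_iff_dotProduct_mulVec.mpr ⟨?_, ?_⟩
  · rw [IsHermitian, conjTranspose_smul, hM.1.eq]
    norm_num
  · intro x
    rw [smul_mulVec, dotProduct_smul, smul_eq_mul]
    exact mul_nonneg (by exact_mod_cast hr) (hM.dotProduct_mulVec_nonneg x)

lemma sq_c (d : ℕ) :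
    (((Real.sqrt d : ℝ)) : ℂ)⁻¹ * (((Real.sqrt d : ℝ)) : ℂ)⁻¹ = ((d : ℂ))⁻¹ := by
  rw [← mul_inv, ← Complex.ofReal_mul, Real.mul_self_sqrt (Nat.cast_nonneg d)]
  norm_num

lemma star_maxEntVec (d : ℕ) : star (maxEntVec d) = maxEntVec d := by
  funext p
  by_cases h : p.1 = p.2 <;>
    simp [maxEntVec, h, Complex.star_def, Complex.conj_ofReal]

lemma maxEnt_norm {d : ℕ} (hd : 0 < d) : star (maxEntVec d) ⬝ᵥ maxEntVec d = 1 := by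
  have hd' : (d : ℂ) ≠ 0 := Nat.cast_ne_zero.mpr hd.ne'
  rw [star_maxEntVec]
  have : ∀ p : Fin d × Fin d, maxEntVec d p * maxEntVec d p
      = if p.1 = p.2 then ((d : ℂ))⁻¹ else 0 := by
    intro p
    by_cases h : p.1 = p.2 <;> simp [maxEntVec, h, sq_c d]
  simp only [dotProduct, this, Fintype.sum_prod_type]
  simp only [Finset.sum_ite_eq, Finset.mem_univ, if_true, Finset.sum_const,
    Finset.card_univ, Fintype.card_fin, nsmul_eq_mul]
  field_simp

lemma Phi_apply {d : ℕ} (p q : Fin d × Fin d) :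
    Phi d p q = (if p.1 = p.2 then ((1 / Real.sqrt d : ℝ) : ℂ) else 0)
      * (if q.1 = q.2 then ((1 / Real.sqrt d : ℝ) : ℂ) else 0) := by
  by_cases hq : q.1 = q.2 <;> by_cases hp : p.1 = p.2 <;>
    simp [Phi, outer, vecMulVec_apply, maxEntVec, hp, hq, Complex.star_def,
      Complex.conj_ofReal]

lemma ptrRight_Phi {d : ℕ} (hd : 0 < d) :
    ptrRight (Phi d) = ((d : ℂ))⁻¹ • (1 : Matrix (Fin d) (Fin d) ℂ) := by
  ext i i'
  simp only [ptrRight, Phi_apply, Matrix.smul_apply, one_apply, smul_eq_mul]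
  by_cases h : i = i'
  · subst h
    have hterm : ∀ f : Fin d, ((if i = f then ((1 / Real.sqrt d : ℝ) : ℂ) else 0)
        * (if i = f then ((1 / Real.sqrt d : ℝ) : ℂ) else 0))
        = if i = f then ((d : ℂ))⁻¹ else 0 := by
      intro f
      by_cases hf : i = f <;> simp [hf, sq_c d]
    rw [Finset.sum_congr rfl (fun f _ => hterm f)]
    simp
  · simp only [if_neg h, mul_zero]
    rw [Finset.sum_eq_zero]
    intro f _
    by_cases hf : i = f
    · have : ¬ i' = f := fun hh => h (by rw [hf, hh])
      simp [this]
    · simp [hf]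

lemma ptrRight_one_pair {d : ℕ} :
    ptrRight (1 : Matrix (Fin d × Fin d) (Fin d × Fin d) ℂ)
      = (d : ℂ) • (1 : Matrix (Fin d) (Fin d) ℂ) := by
  ext i i'
  simp only [ptrRight, one_apply, Matrix.smul_apply, smul_eq_mul, Prod.mk.injEq]
  by_cases h : i = i'
  · subst h; simp
  · simp [h]

lemma ptrRight_mixM_apply {d : ℕ} (A : Matrix (Fin d) (Fin d) ℂ) (B)
    (p q : Fin d × Fin d) :
    ptrRight (mixM A B) p q = A p.2 q.2 * ptrRight B p.1 q.1 := by
  simp only [ptrRight, mixM]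
  rw [← Finset.mul_sum]

lemma trace_mul_mixM_one {d : ℕ}
    (S : Matrix ((Fin d × Fin d) × Fin d) ((Fin d × Fin d) × Fin d) ℂ)
    (σ : Matrix (Fin d) (Fin d) ℂ) (hσ : σ.trace = 1)
    (hpt : ptrRight S = σ ⊗ₖ (1 : Matrix (Fin d) (Fin d) ℂ))
    (A : Matrix (Fin d) (Fin d) ℂ) :
    (S * mixM A 1).trace = A.trace := by
  have key : ∀ x : (Fin d × Fin d) × Fin d,
      (S * mixM A 1) x x = ∑ o2, S x ((x.1.1, o2), x.2) * A o2 x.1.2 := by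
    intro x
    rw [Matrix.mul_apply]
    rw [Fintype.sum_equiv (reix d)
      (fun j => S x j * mixM A 1 j x)
      (fun q => S x ((q.2.1, q.1), q.2.2) * (A q.1 x.1.2 *
        (if q.2 = (x.1.1, x.2) then (1:ℂ) else 0)))
      (fun j => by simp [reix, mixM, one_apply])]
    rw [Fintype.sum_prod_type]
    simp [Finset.sum_ite_eq', mul_ite]
  calc (S * mixM A 1).trace
      = ∑ p : Fin d × Fin d, ∑ o2, (ptrRight S) p (p.1, o2) * A o2 p.2 := by
        unfold Matrix.trace
        simp only [diag_apply, key]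
        rw [Fintype.sum_prod_type]
        refine Finset.sum_congr rfl fun p _ => ?_
        rw [Finset.sum_comm]
        refine Finset.sum_congr rfl fun o2 _ => ?_
        simp only [ptrRight]
        rw [← Finset.sum_mul]
    _ = A.trace := by
        rw [hpt]
        simp only [kroneckerMap_apply, one_apply, Matrix.trace, diag_apply]
        have : ∀ p : Fin d × Fin d,
            (∑ o2, σ p.1 p.1 * (if p.2 = o2 then (1:ℂ) else 0) * A o2 p.2)
            = σ p.1 p.1 * A p.2 p.2 := by
          intro p
          rw [Finset.sum_eq_single p.2]
          · simp
          · intro o2 _ ho2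
            have : ¬ p.2 = o2 := fun hh => ho2 hh.symm
            simp [this]
          · simp
        rw [Finset.sum_congr rfl (fun p _ => this p), Fintype.sum_prod_type]
        have htr : ∑ i : Fin d, ∑ o : Fin d, σ i i * A o o
            = (∑ i : Fin d, σ i i) * (∑ o : Fin d, A o o) := by
          rw [Finset.sum_mul_sum]
        rw [htr]
        have : (∑ i : Fin d, σ i i) = σ.trace := rfl
        rw [this, hσ, one_mul]

lemma ptrRight_add {α β : Type*} [Fintype β] (M N : Matrix (α × β) (α × β) ℂ) :
    ptrRight (M + N) = ptrRight M + ptrRight N := by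
  ext a a'
  simp [ptrRight, Finset.sum_add_distrib]

lemma ptrRight_sub {α β : Type*} [Fintype β] (M N : Matrix (α × β) (α × β) ℂ) :
    ptrRight (M - N) = ptrRight M - ptrRight N := by
  ext a a'
  simp [ptrRight, Finset.sum_sub_distrib]

lemma Omega_decomp {d : ℕ} (ψ : Fin d → ℂ) :
    OmegaTrans ψ = mixM (((d:ℂ))⁻¹ • (outer ψ)ᵀ) (Phi d)
      + mixM (((((d:ℂ)^2 - 1)⁻¹) * (1 - ((d:ℂ))⁻¹)) • (outer ψ)ᵀ) (1 - Phi d)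
      + mixM ((((d:ℂ)^2 - 1)⁻¹) • (1 - (outer ψ)ᵀ)) (1 - Phi d) := by
  ext x y
  simp only [OmegaTrans, mixM, Matrix.add_apply, Matrix.smul_apply, Matrix.sub_apply,
    Matrix.one_apply, smul_eq_mul]
  ring

/-- **Optimal deterministic (approximate) unitary transposition on a known pure
state, single call.** The maximum of `Tr(S Ω)` over single-call deterministic
superchannels `S` is `(2d+1)/(d² + d)`, and it is attained. -/
theorem deterministic_transposition_optimal_fidelity
    (d : ℕ) (hd : 2 ≤ d) (ψ : Fin d → ℂ) (hψ : star ψ ⬝ᵥ ψ = 1) :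
    IsGreatest
      {r : ℝ |
        ∃ S : Matrix ((Fin d × Fin d) × Fin d) ((Fin d × Fin d) × Fin d) ℂ,
          IsSuperchannel S ∧ (S * OmegaTrans ψ).trace = (r : ℂ)}
      ((2 * d + 1) / ((d : ℝ) ^ 2 + d)) := by
  classical
  have hd0 : 0 < d := by omega
  have hdC : (d : ℂ) ≠ 0 := Nat.cast_ne_zero.mpr hd0.ne'
  have hd1C : ((d : ℂ) + 1) ≠ 0 := by
    have : ((d + 1 : ℕ) : ℂ) ≠ 0 := Nat.cast_ne_zero.mpr (by omega)
    push_cast at this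
    exact this
  have hd2C : ((d : ℂ) ^ 2 - 1) ≠ 0 := by
    refine sub_ne_zero.mpr ?_
    intro h
    have h2 : ((d ^ 2 : ℕ) : ℂ) = ((1 : ℕ) : ℂ) := by push_cast; simpa using h
    have := Nat.cast_injective h2
    nlinarith [this]
  have hsumC : (d : ℂ) ^ 2 + d ≠ 0 := by
    have h : (d : ℂ) ^ 2 + d = d * ((d : ℂ) + 1) := by ring
    rw [h]
    exact mul_ne_zero hdC hd1C
  have hdR : (2 : ℝ) ≤ (d : ℝ) := by exact_mod_cast hd
  -- basic objects
  have houter : outer ψ * outer ψ = outer ψ := by rw [outer_mul_self, hψ, one_smul]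
  have hQQ : (outer ψ)ᵀ * (outer ψ)ᵀ = (outer ψ)ᵀ := by
    rw [← Matrix.transpose_mul, houter]
  have hQtr : ((outer ψ)ᵀ).trace = 1 := by
    rw [Matrix.trace_transpose, outer_trace, hψ]
  have hQpsd : ((outer ψ)ᵀ).PosSemidef := (outer_posSemidef ψ).transpose
  have hΦΦ : Phi d * Phi d = Phi d := by
    rw [Phi, outer_mul_self, maxEnt_norm hd0, one_smul]
  have hΦtr : (Phi d).trace = 1 := by rw [Phi, outer_trace, maxEnt_norm hd0]
  have hΦpsd : (Phi d).PosSemidef := outer_posSemidef (maxEntVec d)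
  have h1Q : ((1 : Matrix (Fin d) (Fin d) ℂ) - (outer ψ)ᵀ)
      * (1 - (outer ψ)ᵀ) = 1 - (outer ψ)ᵀ := by
    have h : ((1 : Matrix (Fin d) (Fin d) ℂ) - (outer ψ)ᵀ) * (1 - (outer ψ)ᵀ)
        = 1 - (outer ψ)ᵀ - (outer ψ)ᵀ + (outer ψ)ᵀ * (outer ψ)ᵀ := by noncomm_ring
    rw [h, hQQ]
    abel
  have h1Φ : ((1 : Matrix (Fin d × Fin d) (Fin d × Fin d) ℂ) - Phi d)
      * (1 - Phi d) = 1 - Phi d := by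
    have h : ((1 : Matrix (Fin d × Fin d) (Fin d × Fin d) ℂ) - Phi d) * (1 - Phi d)
        = 1 - Phi d - Phi d + Phi d * Phi d := by noncomm_ring
    rw [h, hΦΦ]
    abel
  have h1Qpsd : ((1 : Matrix (Fin d) (Fin d) ℂ) - (outer ψ)ᵀ).PosSemidef := by
    have hherm : ((1 : Matrix (Fin d) (Fin d) ℂ) - (outer ψ)ᵀ)ᴴ = 1 - (outer ψ)ᵀ := by
      rw [conjTranspose_sub, conjTranspose_one, hQpsd.1.eq]
    have h := posSemidef_conjTranspose_mul_self ((1 : Matrix (Fin d) (Fin d) ℂ) - (outer ψ)ᵀ)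
    rwa [hherm, h1Q] at h
  have h1Φpsd : ((1 : Matrix (Fin d × Fin d) (Fin d × Fin d) ℂ) - Phi d).PosSemidef := by
    have hherm : ((1 : Matrix (Fin d × Fin d) (Fin d × Fin d) ℂ) - Phi d)ᴴ = 1 - Phi d := by
      rw [conjTranspose_sub, conjTranspose_one, hΦpsd.1.eq]
    have h := posSemidef_conjTranspose_mul_self
      ((1 : Matrix (Fin d × Fin d) (Fin d × Fin d) ℂ) - Phi d)
    rwa [hherm, h1Φ] at h
  have hQ1Q : (outer ψ)ᵀ * ((1 : Matrix (Fin d) (Fin d) ℂ) - (outer ψ)ᵀ) = 0 := by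
    rw [Matrix.mul_sub, Matrix.mul_one, hQQ, sub_self]
  have h1QQ : ((1 : Matrix (Fin d) (Fin d) ℂ) - (outer ψ)ᵀ) * (outer ψ)ᵀ = 0 := by
    rw [Matrix.sub_mul, Matrix.one_mul, hQQ, sub_self]
  have hΦ1Φ : Phi d * ((1 : Matrix (Fin d × Fin d) (Fin d × Fin d) ℂ) - Phi d) = 0 := by
    rw [Matrix.mul_sub, Matrix.mul_one, hΦΦ, sub_self]
  have h1ΦΦ : ((1 : Matrix (Fin d × Fin d) (Fin d × Fin d) ℂ) - Phi d) * Phi d = 0 := by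
    rw [Matrix.sub_mul, Matrix.one_mul, hΦΦ, sub_self]
  have htr1d : (1 : Matrix (Fin d) (Fin d) ℂ).trace = (d : ℂ) := by
    simp [Matrix.trace_one]
  have htr1dd : (1 : Matrix (Fin d × Fin d) (Fin d × Fin d) ℂ).trace = (d : ℂ) ^ 2 := by
    simp [Matrix.trace_one]
    push_cast
    ring
  have htr1mQ : ((1 : Matrix (Fin d) (Fin d) ℂ) - (outer ψ)ᵀ).trace = (d : ℂ) - 1 := by
    rw [Matrix.trace_sub, htr1d, hQtr]
  have htr1mΦ : ((1 : Matrix (Fin d × Fin d) (Fin d × Fin d) ℂ) - Phi d).trace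
      = (d : ℂ) ^ 2 - 1 := by
    rw [Matrix.trace_sub, htr1dd, hΦtr]
  -- the value as a complex number
  have hval : ((((2 * d + 1) / ((d : ℝ) ^ 2 + d)) : ℝ) : ℂ)
      = ((d : ℂ))⁻¹ + ((d : ℂ) ^ 2 - 1)⁻¹ * ((d : ℂ) - 1) := by
    push_cast
    field_simp
    ring
  constructor
  · -- attainment
    refine ⟨mixM (outer ψ)ᵀ (Phi d)
        + mixM ((((d:ℂ)^2 - 1)⁻¹) • ((1 : Matrix (Fin d) (Fin d) ℂ) - (outer ψ)ᵀ))
          ((1 : Matrix (Fin d × Fin d) (Fin d × Fin d) ℂ) - Phi d),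
      ⟨?_, ((d : ℂ))⁻¹ • (1 : Matrix (Fin d) (Fin d) ℂ), ?_, ?_, ?_⟩, ?_⟩
    · -- PSD
      refine Matrix.PosSemidef.add (mixM_posSemidef hQpsd hΦpsd) (mixM_posSemidef ?_ h1Φpsd)
      have hcoe : ((((d:ℝ)^2 - 1)⁻¹ : ℝ) : ℂ) = (((d:ℂ)^2 - 1)⁻¹) := by push_cast; ring
      rw [← hcoe]
      exact smul_posSemidef h1Qpsd (inv_nonneg.mpr (by nlinarith [hdR]))
    · -- σ PSD
      have hcoe : ((((d:ℝ))⁻¹ : ℝ) : ℂ) = ((d:ℂ))⁻¹ := by push_cast; ring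
      rw [← hcoe]
      exact smul_posSemidef Matrix.PosSemidef.one (by positivity)
    · -- σ trace
      rw [Matrix.trace_smul, htr1d, smul_eq_mul, inv_mul_cancel₀ hdC]
    · -- partial trace condition
      ext p q
      rw [ptrRight_add]
      have h2 : ptrRight (mixM ((((d:ℂ)^2 - 1)⁻¹) •
          ((1 : Matrix (Fin d) (Fin d) ℂ) - (outer ψ)ᵀ))
          ((1 : Matrix (Fin d × Fin d) (Fin d × Fin d) ℂ) - Phi d)) p q
          = ((((d:ℂ)^2 - 1)⁻¹) • ((1 : Matrix (Fin d) (Fin d) ℂ) - (outer ψ)ᵀ)) p.2 q.2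
            * (ptrRight ((1 : Matrix (Fin d × Fin d) (Fin d × Fin d) ℂ) - Phi d)) p.1 q.1 :=
        ptrRight_mixM_apply _ _ p q
      rw [Matrix.add_apply, ptrRight_mixM_apply, h2, ptrRight_sub, ptrRight_Phi hd0,
        ptrRight_one_pair]
      simp only [Matrix.sub_apply, Matrix.smul_apply, Matrix.one_apply, kroneckerMap_apply,
        smul_eq_mul]
      by_cases h1 : p.1 = q.1 <;> by_cases h2 : p.2 = q.2
      · simp only [if_pos h1, if_pos h2]
        field_simp
        ring
      · simp only [if_pos h1, if_neg h2]
        field_simp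
        ring
      · simp only [if_neg h1, if_pos h2]
        ring
      · simp only [if_neg h1, if_neg h2]
        ring
    · -- trace value
      rw [Omega_decomp ψ, Matrix.mul_add, Matrix.mul_add, Matrix.add_mul, Matrix.add_mul,
        Matrix.add_mul]
      rw [mixM_mul, mixM_mul, mixM_mul, mixM_mul, mixM_mul, mixM_mul]
      rw [Matrix.trace_add, Matrix.trace_add, Matrix.trace_add, Matrix.trace_add,
        Matrix.trace_add]
      rw [mixM_trace, mixM_trace, mixM_trace, mixM_trace, mixM_trace, mixM_trace]
      rw [hΦΦ, hΦ1Φ, h1ΦΦ, h1Φ]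
      have e1 : (outer ψ)ᵀ * (((d:ℂ))⁻¹ • (outer ψ)ᵀ) = ((d:ℂ))⁻¹ • (outer ψ)ᵀ := by
        rw [mul_smul_comm, hQQ]
      have e2 : (outer ψ)ᵀ * ((((d:ℂ)^2 - 1)⁻¹ * (1 - ((d:ℂ))⁻¹)) • (outer ψ)ᵀ)
          = (((d:ℂ)^2 - 1)⁻¹ * (1 - ((d:ℂ))⁻¹)) • (outer ψ)ᵀ := by
        rw [mul_smul_comm, hQQ]
      have e3 : (outer ψ)ᵀ * ((((d:ℂ)^2 - 1)⁻¹) • (1 - (outer ψ)ᵀ))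
          = (0 : Matrix (Fin d) (Fin d) ℂ) := by
        rw [mul_smul_comm, hQ1Q, smul_zero]
      have e4 : ((((d:ℂ)^2 - 1)⁻¹) • ((1 : Matrix (Fin d) (Fin d) ℂ) - (outer ψ)ᵀ))
          * (((d:ℂ))⁻¹ • (outer ψ)ᵀ) = (0 : Matrix (Fin d) (Fin d) ℂ) := by
        rw [smul_mul_assoc, mul_smul_comm, h1QQ, smul_zero, smul_zero]
      have e5 : ((((d:ℂ)^2 - 1)⁻¹) • ((1 : Matrix (Fin d) (Fin d) ℂ) - (outer ψ)ᵀ))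
          * ((((d:ℂ)^2 - 1)⁻¹ * (1 - ((d:ℂ))⁻¹)) • (outer ψ)ᵀ)
          = (0 : Matrix (Fin d) (Fin d) ℂ) := by
        rw [smul_mul_assoc, mul_smul_comm, h1QQ, smul_zero, smul_zero]
      have e6 : ((((d:ℂ)^2 - 1)⁻¹) • ((1 : Matrix (Fin d) (Fin d) ℂ) - (outer ψ)ᵀ))
          * ((((d:ℂ)^2 - 1)⁻¹) • (1 - (outer ψ)ᵀ))
          = (((d:ℂ)^2 - 1)⁻¹ * ((d:ℂ)^2 - 1)⁻¹) • ((1 : Matrix (Fin d) (Fin d) ℂ) - (outer ψ)ᵀ) := by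
        rw [smul_mul_assoc, mul_smul_comm, h1Q, smul_smul]
      rw [e1, e2, e3, e4, e5, e6]
      simp only [Matrix.trace_smul, Matrix.trace_zero, hQtr, htr1mQ, hΦtr, htr1mΦ,
        smul_eq_mul, mul_one, zero_mul, mul_zero, add_zero, zero_add]
      rw [hval]
      field_simp
  · -- upper bound
    rintro r ⟨S, ⟨hSpsd, σ, hσpsd, hσtr, hpt⟩, htr⟩
    set G : Matrix ((Fin d × Fin d) × Fin d) ((Fin d × Fin d) × Fin d) ℂ :=
      mixM ((((d:ℂ))⁻¹ - ((d:ℂ)^2 - 1)⁻¹ * (1 - ((d:ℂ))⁻¹)) • (outer ψ)ᵀ)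
          ((1 : Matrix (Fin d × Fin d) (Fin d × Fin d) ℂ) - Phi d)
        + mixM ((((d:ℂ)^2 - 1)⁻¹) • ((1 : Matrix (Fin d) (Fin d) ℂ) - (outer ψ)ᵀ)) (Phi d)
      with hGdef
    have hGpsd : G.PosSemidef := by
      refine Matrix.PosSemidef.add (mixM_posSemidef ?_ h1Φpsd) (mixM_posSemidef ?_ hΦpsd)
      · have hcoe : ((((d:ℝ) + 1)⁻¹ : ℝ) : ℂ)
            = ((d:ℂ))⁻¹ - ((d:ℂ)^2 - 1)⁻¹ * (1 - ((d:ℂ))⁻¹) := by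
          push_cast
          field_simp
          ring
        rw [← hcoe]
        exact smul_posSemidef hQpsd (by positivity)
      · have hcoe : ((((d:ℝ)^2 - 1)⁻¹ : ℝ) : ℂ) = (((d:ℂ)^2 - 1)⁻¹) := by push_cast; ring
        rw [← hcoe]
        exact smul_posSemidef h1Qpsd (inv_nonneg.mpr (by nlinarith [hdR]))
    have hΩG : OmegaTrans ψ + G
        = mixM (((d:ℂ))⁻¹ • (outer ψ)ᵀ
            + (((d:ℂ)^2 - 1)⁻¹) • ((1 : Matrix (Fin d) (Fin d) ℂ) - (outer ψ)ᵀ)) 1 := by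
      rw [hGdef]
      ext x y
      simp only [OmegaTrans, mixM, Matrix.add_apply, Matrix.smul_apply, Matrix.sub_apply,
        Matrix.one_apply, smul_eq_mul]
      ring
    have hZtr : (((d:ℂ))⁻¹ • (outer ψ)ᵀ
        + (((d:ℂ)^2 - 1)⁻¹) • ((1 : Matrix (Fin d) (Fin d) ℂ) - (outer ψ)ᵀ)).trace
        = ((d : ℂ))⁻¹ + ((d : ℂ) ^ 2 - 1)⁻¹ * ((d : ℂ) - 1) := by
      rw [Matrix.trace_add, Matrix.trace_smul, Matrix.trace_smul, hQtr, htr1mQ]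
      simp [smul_eq_mul]
    have hkey : (r : ℂ) + (S * G).trace
        = ((d : ℂ))⁻¹ + ((d : ℂ) ^ 2 - 1)⁻¹ * ((d : ℂ) - 1) := by
      rw [← htr, ← Matrix.trace_add, ← Matrix.mul_add, hΩG,
        trace_mul_mixM_one S σ hσtr hpt, hZtr]
    have hpos : 0 ≤ (S * G).trace := posSemidef_trace_mul_nonneg hSpsd hGpsd
    have hle : (r : ℂ) ≤ ((d : ℂ))⁻¹ + ((d : ℂ) ^ 2 - 1)⁻¹ * ((d : ℂ) - 1) := by
      have h := eq_sub_of_add_eq hkey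
      rw [h]
      exact sub_le_self _ hpos
    rw [← hval] at hle
    exact_mod_cast hle
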